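/- arXiv:2503.21075 — 2 statements merged into one kernel-verified Lean document; each statement's English description precedes it below -/
import Mathlib

section
/- Let d ≥ 1 and β ∈ ℝ. There is a constant C = C(d) > 0 such that for every finite signed Borel measure μ on ℝ^d with ‖μ‖_B := sup_{t>0} t^{(d−β)/2} ‖p_t ∗ μ‖_{L^∞} < ∞ and every R > 0, ∫_{B(0,R)} |μ̂(ξ)|² dξ ≤ C R^{d−β} ‖μ‖ ‖μ‖_B. -/
open MeasureTheory Real
open scoped ENNReal

noncomputable section

/-- Euclidean space `ℝ^d`. -/
abbrev Ed (d : ℕ) := EuclideanSpace ℝ (Fin d)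

/-- The heat kernel `p_t(x) = (4πt)^{-d/2} exp(-|x|²/(4t))`. -/
def heatKernel (d : ℕ) (t : ℝ) (x : Ed d) : ℝ :=
  (4 * π * t) ^ (-(d : ℝ) / 2) * Real.exp (-‖x‖ ^ 2 / (4 * t))

/-- Integral of a real function against a finite signed measure. -/
def smIntegral {d : ℕ} (ν : MeasureTheory.SignedMeasure (Ed d)) (f : Ed d → ℝ) : ℝ :=
  (∫ x, f x ∂ν.toJordanDecomposition.posPart) - ∫ x, f x ∂ν.toJordanDecomposition.negPart

/-- Heat-kernel convolution `(p_t ∗ ν)(x)` of a finite signed measure. -/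
def heatConv (d : ℕ) (t : ℝ) (ν : MeasureTheory.SignedMeasure (Ed d)) (x : Ed d) : ℝ :=
  smIntegral ν (fun y => heatKernel d t (x - y))

/-- The Fourier transform `ν̂(ξ) = ∫ exp(-2πi x·ξ) dν(x)` of a finite signed measure. -/
def fourierSM (d : ℕ) (ν : MeasureTheory.SignedMeasure (Ed d)) (ξ : Ed d) : ℂ :=
  (∫ x, Complex.exp (-(2 * π * Complex.I) * ((inner ℝ x ξ : ℝ) : ℂ)) ∂ν.toJordanDecomposition.posPart)
  - ∫ x, Complex.exp (-(2 * π * Complex.I) * ((inner ℝ x ξ : ℝ) : ℂ)) ∂ν.toJordanDecomposition.negPart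

/-- The Besov `Ḃ^{β-d}_{∞,∞}` norm `sup_{t>0} t^{(d-β)/2} ‖p_t ∗ ν‖_∞`. -/
def besovNorm (d : ℕ) (β : ℝ) (ν : MeasureTheory.SignedMeasure (Ed d)) : ℝ≥0∞ :=
  ⨆ t : {t : ℝ // 0 < t},
    ENNReal.ofReal (t.1 ^ (((d : ℝ) - β) / 2)) * eLpNorm (heatConv d t.1 ν) ⊤ volume

/-- The weak `L^p` quasinorm `sup_{λ>0} λ |{|g| > λ}|^{1/p}`. -/
def weakNorm (d : ℕ) (p : ℝ) (g : Ed d → ℂ) : ℝ≥0∞ :=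
  ⨆ l : {l : ℝ // 0 < l},
    ENNReal.ofReal l.1 * (volume {ξ : Ed d | l.1 < ‖g ξ‖}) ^ (1 / p)

/-- Total variation of a signed measure, as a real number. -/
def tv {d : ℕ} (ν : MeasureTheory.SignedMeasure (Ed d)) : ℝ :=
  (ν.totalVariation Set.univ).toReal


open FourierTransform
open scoped InnerProductSpace

lemma gauss_ft (d : ℕ) {t : ℝ} (ht : 0 < t) (z : Ed d) :
    (∫ ξ : Ed d, Complex.exp (-(2 * π * Complex.I) * ((inner ℝ z ξ : ℝ) : ℂ))
        * Complex.exp (-((8 * π^2 * t : ℝ) : ℂ) * ‖ξ‖^2))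
      = ((heatKernel d (2*t) z : ℝ) : ℂ) := by
  have hb : (0:ℝ) < 8 * π^2 * t := by positivity
  have h1 : (∫ ξ : Ed d, Complex.exp (-(2 * π * Complex.I) * ((inner ℝ z ξ : ℝ) : ℂ))
        * Complex.exp (-((8 * π^2 * t : ℝ) : ℂ) * ‖ξ‖^2))
      = 𝓕 (fun v : Ed d => Complex.exp (-((8 * π^2 * t : ℝ):ℂ) * ‖v‖^2)) z := by
    rw [Real.fourier_eq']
    congr 1 with ξ
    rw [smul_eq_mul]
    congr 1
    rw [real_inner_comm]
    push_cast
    ring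
  rw [h1, fourier_gaussian_innerProductSpace
    (by simp only [Complex.ofReal_re]; exact hb)]
  have hfr : (Module.finrank ℝ (Ed d) : ℂ) = (d : ℂ) := by norm_cast; simp
  rw [hfr]
  have hd2 : ((d:ℂ)/2) = (((d:ℝ)/2 : ℝ) : ℂ) := by push_cast; ring
  have hpos : (0:ℝ) < π / (8 * π^2 * t) := by positivity
  have h2 : ((π : ℂ) / ((8 * π^2 * t : ℝ) : ℂ)) ^ ((d:ℂ)/2)
      = (((π / (8 * π^2 * t)) ^ ((d:ℝ)/2) : ℝ) : ℂ) := by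
    rw [← Complex.ofReal_div, hd2, ← Complex.ofReal_cpow hpos.le]
  rw [h2]
  have h3 : (-(π:ℂ)^2 * (‖z‖:ℂ)^2 / ((8 * π^2 * t : ℝ):ℂ)) = ((-‖z‖^2 / (8*t) : ℝ) : ℂ) := by
    have hπ : (π:ℂ) ≠ 0 := by exact_mod_cast Real.pi_ne_zero
    have htc : ((t:ℂ)) ≠ 0 := by exact_mod_cast ht.ne'
    push_cast
    field_simp
  rw [h3, ← Complex.ofReal_exp, ← Complex.ofReal_mul]
  norm_cast
  unfold heatKernel
  have h4 : π / (8 * π^2 * t) = (4 * π * (2*t))⁻¹ := by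
    have : π ≠ 0 := Real.pi_ne_zero
    field_simp
    ring
  have h5 : ((4 * π * (2*t))⁻¹) ^ ((d:ℝ)/2) = (4 * π * (2*t)) ^ (-((d:ℝ)/2)) := by
    rw [← Real.rpow_neg_one, ← Real.rpow_mul (by positivity)]
    norm_num
  rw [h4, h5, show (4*(2*t)) = 8*t by ring, neg_div (2:ℝ) (d:ℝ)]

lemma gauss_int (d : ℕ) {c : ℝ} (hc : 0 < c) :
    Integrable (fun ξ : Ed d => rexp (-c * ‖ξ‖^2)) volume := by
  have h := (GaussianFourier.integrable_cexp_neg_mul_sq_norm_add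
    (V := Ed d) (b := (c:ℂ)) (by simpa using hc) 0 0).norm
  apply h.congr
  filter_upwards with ξ
  rw [Complex.norm_exp]
  norm_num [← Complex.ofReal_pow]

lemma cont_bound_sup {d : ℕ} {f : Ed d → ℝ} (hf : Continuous f)
    (x : Ed d) : (‖f x‖₊ : ℝ≥0∞) ≤ eLpNorm f ⊤ (volume : Measure (Ed d)) := by
  rw [eLpNorm_exponent_top, eLpNormEssSup]
  by_contra hlt
  push_neg at hlt
  set c := essSup (fun y : Ed d => (‖f y‖₊ : ℝ≥0∞)) (volume : Measure (Ed d)) with hc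
  have hae : ∀ᵐ y : Ed d, (‖f y‖₊ : ℝ≥0∞) ≤ c := ENNReal.ae_le_essSup _
  have hopen : IsOpen {y : Ed d | c < (‖f y‖₊ : ℝ≥0∞)} := by
    have hcont : Continuous fun y : Ed d => (‖f y‖₊ : ℝ≥0∞) :=
      ENNReal.continuous_coe.comp (continuous_nnnorm.comp hf)
    exact isOpen_lt continuous_const hcont
  have hpos : 0 < volume {y : Ed d | c < (‖f y‖₊ : ℝ≥0∞)} :=
    hopen.measure_pos volume ⟨x, hlt⟩
  have hzero : volume {y : Ed d | c < (‖f y‖₊ : ℝ≥0∞)} = 0 := by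
    have hsub : {y : Ed d | c < (‖f y‖₊ : ℝ≥0∞)} ⊆ {y : Ed d | ¬ ((‖f y‖₊ : ℝ≥0∞) ≤ c)} := by
      intro y hy; exact not_le.2 hy
    exact measure_mono_null hsub hae
  exact hpos.ne' hzero

/-- the phase factor -/
def phase {d : ℕ} (x ξ : Ed d) : ℂ :=
  Complex.exp (-(2 * π * Complex.I) * ((inner ℝ x ξ : ℝ) : ℂ))

lemma norm_phase {d : ℕ} (x ξ : Ed d) : ‖phase x ξ‖ = 1 := by
  unfold phase
  rw [Complex.norm_exp]
  norm_num [mul_comm]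

lemma cont_phase {d : ℕ} : Continuous fun p : Ed d × Ed d => phase p.1 p.2 := by
  unfold phase
  apply Complex.continuous_exp.comp
  exact (continuous_const.mul (Complex.continuous_ofReal.comp continuous_inner))

lemma cont_phase_left {d : ℕ} (ξ : Ed d) : Continuous fun x : Ed d => phase x ξ := by
  unfold phase
  exact Complex.continuous_exp.comp (continuous_const.mul
    (Complex.continuous_ofReal.comp (Continuous.inner continuous_id continuous_const)))

lemma cont_phase_right {d : ℕ} (x : Ed d) : Continuous fun ξ : Ed d => phase x ξ := by
  unfold phase
  exact Complex.continuous_exp.comp (continuous_const.mul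
    (Complex.continuous_ofReal.comp (Continuous.inner continuous_const continuous_id)))

lemma cont_F {d : ℕ} (μ : Measure (Ed d)) [IsFiniteMeasure μ] :
    Continuous fun ξ : Ed d => ∫ x, phase x ξ ∂μ := by
  apply continuous_of_dominated (bound := fun _ => (1:ℝ))
  · exact fun ξ => ((cont_phase_left ξ).aestronglyMeasurable)
  · intro ξ
    filter_upwards with x
    rw [norm_phase]
  · exact integrable_const 1
  · filter_upwards with x
    exact cont_phase_right x

lemma norm_F_le {d : ℕ} (μ : Measure (Ed d)) [IsFiniteMeasure μ] (ξ : Ed d) :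
    ‖∫ x, phase x ξ ∂μ‖ ≤ (μ Set.univ).toReal := by
  have := norm_integral_le_of_norm_le_const (μ := μ) (f := fun x => phase x ξ) (C := 1)
    (by filter_upwards with x; rw [norm_phase])
  simpa [measureReal_def] using this

lemma norm_cexp_gauss {t : ℝ} {d : ℕ} (ξ : Ed d) :
    ‖Complex.exp (-((8 * π^2 * t : ℝ) : ℂ) * ‖ξ‖^2)‖ = rexp (-(8 * π^2 * t) * ‖ξ‖^2) := by
  rw [Complex.norm_exp]
  norm_num [← Complex.ofReal_pow]

lemma heatKernel_nonneg (d : ℕ) {t : ℝ} (ht : 0 < t) (x : Ed d) : 0 ≤ heatKernel d t x := by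
  unfold heatKernel
  positivity

lemma heatKernel_le (d : ℕ) {t : ℝ} (ht : 0 < t) (x : Ed d) :
    heatKernel d t x ≤ (4 * π * t) ^ (-(d : ℝ) / 2) := by
  unfold heatKernel
  have h1 : Real.exp (-‖x‖ ^ 2 / (4 * t)) ≤ 1 := by
    rw [Real.exp_le_one_iff]
    have h0 : (0:ℝ) ≤ ‖x‖^2 / (4*t) := by positivity
    have : -‖x‖ ^ 2 / (4 * t) = -(‖x‖^2 / (4*t)) := by ring
    linarith [this ▸ neg_nonpos.2 h0]
  have h2 : (0:ℝ) ≤ (4 * π * t) ^ (-(d : ℝ) / 2) := by positivity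
  nlinarith

lemma cont_heatKernel (d : ℕ) (t : ℝ) : Continuous fun x : Ed d => heatKernel d t x := by
  unfold heatKernel
  fun_prop

lemma phase_mul_conj {d : ℕ} (x y ξ : Ed d) :
    phase x ξ * (starRingEnd ℂ) (phase y ξ) = phase (x - y) ξ := by
  unfold phase
  rw [← Complex.exp_conj, ← Complex.exp_add]
  congr 1
  rw [inner_sub_left]
  simp only [map_mul, map_neg, Complex.conj_I, Complex.conj_ofReal, map_ofNat]
  push_cast
  ring

lemma keyK (d : ℕ) {t : ℝ} (ht : 0 < t) (μ₁ μ₂ : Measure (Ed d))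
    [IsFiniteMeasure μ₁] [IsFiniteMeasure μ₂] :
    (∫ ξ : Ed d, Complex.exp (-((8 * π^2 * t : ℝ) : ℂ) * ‖ξ‖^2) *
        ((∫ x, phase x ξ ∂μ₁) * (starRingEnd ℂ) (∫ y, phase y ξ ∂μ₂)))
      = ((∫ x, ∫ y, heatKernel d (2*t) (x - y) ∂μ₂ ∂μ₁ : ℝ) : ℂ) := by
  have hb : (0:ℝ) < 8 * π^2 * t := by positivity
  have step1 : ∀ ξ : Ed d,
      Complex.exp (-((8 * π^2 * t : ℝ) : ℂ) * ‖ξ‖^2) *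
        ((∫ x, phase x ξ ∂μ₁) * (starRingEnd ℂ) (∫ y, phase y ξ ∂μ₂))
      = ∫ p : Ed d × Ed d, Complex.exp (-((8 * π^2 * t : ℝ) : ℂ) * ‖ξ‖^2) *
          (phase p.1 ξ * (starRingEnd ℂ) (phase p.2 ξ)) ∂(μ₁.prod μ₂) := by
    intro ξ
    rw [← integral_conj, ← integral_prod_mul, ← integral_const_mul]
  simp_rw [step1]
  rw [integral_integral_swap]
  · have inner_eq : ∀ p : Ed d × Ed d,
        (∫ ξ : Ed d, Complex.exp (-((8 * π^2 * t : ℝ) : ℂ) * ‖ξ‖^2) *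
          (phase p.1 ξ * (starRingEnd ℂ) (phase p.2 ξ)))
        = ((heatKernel d (2*t) (p.1 - p.2) : ℝ) : ℂ) := by
      intro p
      have hpt : ∀ ξ : Ed d, Complex.exp (-((8 * π^2 * t : ℝ) : ℂ) * ‖ξ‖^2) *
          (phase p.1 ξ * (starRingEnd ℂ) (phase p.2 ξ))
          = phase (p.1 - p.2) ξ * Complex.exp (-((8 * π^2 * t : ℝ) : ℂ) * ‖ξ‖^2) := by
        intro ξ
        rw [phase_mul_conj, mul_comm]
      simp_rw [hpt]
      exact gauss_ft d ht (p.1 - p.2)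
    rw [integral_congr_ae (Filter.Eventually.of_forall inner_eq)]
    have hint : Integrable (fun p : Ed d × Ed d => heatKernel d (2*t) (p.1 - p.2))
        (μ₁.prod μ₂) := by
      apply Integrable.mono' (g := fun _ : Ed d × Ed d => (4 * π * (2*t)) ^ (-(d : ℝ) / 2))
      · exact integrable_const _
      · exact ((cont_heatKernel d (2*t)).comp continuous_sub).aestronglyMeasurable
      · filter_upwards with p
        rw [Real.norm_eq_abs, abs_of_nonneg (heatKernel_nonneg _ (by positivity) _)]
        exact heatKernel_le d (by positivity) _
    rw [← integral_prod _ hint]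
    exact integral_ofReal
  · apply Integrable.mono'
      (g := fun q : Ed d × (Ed d × Ed d) => rexp (-(8 * π^2 * t) * ‖q.1‖^2) * 1)
    · exact (gauss_int d hb).mul_prod (integrable_const 1)
    · apply Continuous.aestronglyMeasurable
      unfold Function.uncurry
      apply Continuous.mul
      · apply Complex.continuous_exp.comp
        fun_prop
      · apply Continuous.mul
        · unfold phase
          exact Complex.continuous_exp.comp (continuous_const.mul
            (Complex.continuous_ofReal.comp
              (Continuous.inner (continuous_fst.comp continuous_snd) continuous_fst)))
        · apply Complex.continuous_conj.comp
          unfold phase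
          exact Complex.continuous_exp.comp (continuous_const.mul
            (Complex.continuous_ofReal.comp
              (Continuous.inner (continuous_snd.comp continuous_snd) continuous_fst)))
    · filter_upwards with q
      obtain ⟨ξ, p⟩ := q
      simp only [Function.uncurry_apply_pair, norm_mul, norm_cexp_gauss, norm_phase,
        RCLike.norm_conj, mul_one]
      exact le_rfl


lemma int_hk {d : ℕ} {t : ℝ} (ht : 0 < t) (μ : Measure (Ed d)) [IsFiniteMeasure μ] (x : Ed d) :
    Integrable (fun y => heatKernel d t (x - y)) μ := by
  apply Integrable.mono' (g := fun _ => (4 * π * t) ^ (-(d : ℝ) / 2))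
  · exact integrable_const _
  · exact ((cont_heatKernel d t).comp (continuous_const.sub continuous_id)).aestronglyMeasurable
  · filter_upwards with y
    rw [Real.norm_eq_abs, abs_of_nonneg (heatKernel_nonneg _ ht _)]
    exact heatKernel_le d ht _

lemma cont_conv {d : ℕ} {t : ℝ} (ht : 0 < t) (μ : Measure (Ed d)) [IsFiniteMeasure μ] :
    Continuous fun x : Ed d => ∫ y, heatKernel d t (x - y) ∂μ := by
  apply continuous_of_dominated (bound := fun _ => (4 * π * t) ^ (-(d : ℝ) / 2))
  · exact fun x =>
      ((cont_heatKernel d t).comp (continuous_const.sub continuous_id)).aestronglyMeasurable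
  · intro x
    filter_upwards with y
    rw [Real.norm_eq_abs, abs_of_nonneg (heatKernel_nonneg _ ht _)]
    exact heatKernel_le d ht _
  · exact integrable_const _
  · filter_upwards with y
    exact (cont_heatKernel d t).comp (continuous_id.sub continuous_const)

lemma norm_conv_le {d : ℕ} {t : ℝ} (ht : 0 < t) (μ : Measure (Ed d)) [IsFiniteMeasure μ]
    (x : Ed d) :
    ‖∫ y, heatKernel d t (x - y) ∂μ‖ ≤ (4 * π * t) ^ (-(d : ℝ) / 2) * (μ Set.univ).toReal := by
  apply norm_integral_le_of_norm_le_const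
  filter_upwards with y
  rw [Real.norm_eq_abs, abs_of_nonneg (heatKernel_nonneg _ ht _)]
  exact heatKernel_le d ht _

lemma int_conv {d : ℕ} {t : ℝ} (ht : 0 < t) (μ μ' : Measure (Ed d)) [IsFiniteMeasure μ]
    [IsFiniteMeasure μ'] :
    Integrable (fun x => ∫ y, heatKernel d t (x - y) ∂μ) μ' := by
  apply Integrable.mono'
    (g := fun _ => (4 * π * t) ^ (-(d : ℝ) / 2) * (μ Set.univ).toReal)
  · exact integrable_const _
  · exact (cont_conv ht μ).aestronglyMeasurable
  · filter_upwards with x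
    exact norm_conv_le ht μ x

lemma tInt {d : ℕ} {b : ℝ} (hb : 0 < b) (μ₁ μ₂ : Measure (Ed d)) [IsFiniteMeasure μ₁]
    [IsFiniteMeasure μ₂] :
    Integrable (fun ξ : Ed d => Complex.exp (-((b : ℝ) : ℂ) * ‖ξ‖^2) *
      ((∫ x, phase x ξ ∂μ₁) * (starRingEnd ℂ) (∫ y, phase y ξ ∂μ₂))) volume := by
  apply Integrable.mono'
    (g := fun ξ : Ed d => rexp (-b * ‖ξ‖^2) * ((μ₁ Set.univ).toReal * (μ₂ Set.univ).toReal))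
  · exact (gauss_int d hb).mul_const _
  · apply Continuous.aestronglyMeasurable
    apply Continuous.mul
    · apply Complex.continuous_exp.comp
      fun_prop
    · exact (cont_F μ₁).mul (Complex.continuous_conj.comp (cont_F μ₂))
  · filter_upwards with ξ
    rw [norm_mul, norm_mul]
    have h1 : ‖Complex.exp (-((b : ℝ) : ℂ) * ‖ξ‖^2)‖ = rexp (-b * ‖ξ‖^2) := by
      rw [Complex.norm_exp]
      norm_num [← Complex.ofReal_pow]
    rw [h1, RCLike.norm_conj]
    gcongr <;> first
      | exact (Real.exp_pos _).le
      | exact norm_F_le μ₁ ξ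
      | exact norm_F_le μ₂ ξ
      | positivity

lemma s_pow {R : ℝ} (hR : 0 < R) (γ : ℝ) :
    (2 * (R^2)⁻¹) ^ (-γ) = 2 ^ (-γ) * R ^ (2*γ) := by
  rw [Real.mul_rpow (by norm_num) (by positivity)]
  congr 1
  have h1 : ((R^2)⁻¹ : ℝ) = R ^ (-2 : ℝ) := by
    rw [← Real.rpow_natCast R 2, ← Real.rpow_neg hR.le]
    norm_num
  rw [h1, ← Real.rpow_mul hR.le]
  congr 1
  ring

/-- For `d ≥ 1` and `β ∈ ℝ` there is `C = C(d) > 0` such that every finite signed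
measure `μ` on `ℝ^d` with `‖μ‖_B = sup_{t>0} t^{(d-β)/2}‖p_t ∗ μ‖_∞ < ∞` satisfies
`∫_{B(0,R)} |μ̂(ξ)|² dξ ≤ C R^{d-β} ‖μ‖ ‖μ‖_B` for all `R > 0`. -/
theorem stmt8 (d : ℕ) (hd : 1 ≤ d) (β : ℝ) :
    ∃ C : ℝ, 0 < C ∧
      ∀ ν : MeasureTheory.SignedMeasure (Ed d), besovNorm d β ν ≠ ⊤ →
      ∀ R : ℝ, 0 < R →
        (∫⁻ ξ in Metric.ball (0 : Ed d) R, ENNReal.ofReal (‖fourierSM d ν ξ‖ ^ 2))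
          ≤ ENNReal.ofReal (C * R ^ ((d : ℝ) - β)) *
              ν.totalVariation Set.univ * besovNorm d β ν := by
  classical
  refine ⟨rexp (8 * π^2) * 2 ^ (-(((d:ℝ) - β) / 2)), by positivity, ?_⟩
  intro ν hν R hR
  set P := ν.toJordanDecomposition.posPart with hP
  set N := ν.toJordanDecomposition.negPart with hN
  set t : ℝ := (R ^ 2)⁻¹ with htd
  have ht : 0 < t := by positivity
  set s : ℝ := 2 * t with hsd
  have hs : 0 < s := by positivity
  set b : ℝ := 8 * π^2 * t with hbd
  have hb : 0 < b := by positivity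
  set γ : ℝ := ((d:ℝ) - β) / 2 with hγd
  set F := fourierSM d ν with hFd
  have hFdef : ∀ ξ, F ξ = (∫ x, phase x ξ ∂P) - (∫ x, phase x ξ ∂N) := fun ξ => rfl
  set h := heatConv d s ν with hhd
  have hhdef : ∀ x, h x = (∫ y, heatKernel d s (x - y) ∂P)
      - (∫ y, heatKernel d s (x - y) ∂N) := fun x => rfl
  have contF : Continuous F := by
    have : F = fun ξ => (∫ x, phase x ξ ∂P) - (∫ x, phase x ξ ∂N) := funext hFdef
    rw [this]
    exact (cont_F P).sub (cont_F N)
  have conth : Continuous h := by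
    have : h = fun x => (∫ y, heatKernel d s (x - y) ∂P)
        - (∫ y, heatKernel d s (x - y) ∂N) := funext hhdef
    rw [this]
    exact (cont_conv hs P).sub (cont_conv hs N)
  -- Besov bound on the sup norm of h
  have hBle : ENNReal.ofReal (s ^ γ) * eLpNorm h ⊤ volume ≤ besovNorm d β ν := by
    have := le_iSup (fun u : {u : ℝ // 0 < u} =>
      ENNReal.ofReal (u.1 ^ (((d:ℝ) - β) / 2)) * eLpNorm (heatConv d u.1 ν) ⊤ volume) ⟨s, hs⟩
    exact this
  have ha0 : ENNReal.ofReal (s ^ γ) ≠ 0 :=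
    (ENNReal.ofReal_pos.2 (Real.rpow_pos_of_pos hs _)).ne'
  have hainv : (ENNReal.ofReal (s ^ γ))⁻¹ = ENNReal.ofReal (s ^ (-γ)) := by
    rw [Real.rpow_neg hs.le, ENNReal.ofReal_inv_of_pos (Real.rpow_pos_of_pos hs _)]
  have hE : eLpNorm h ⊤ volume ≤ ENNReal.ofReal (s ^ (-γ)) * besovNorm d β ν := by
    have h1 : eLpNorm h ⊤ volume
        = (ENNReal.ofReal (s ^ γ))⁻¹ * (ENNReal.ofReal (s ^ γ) * eLpNorm h ⊤ volume) := by
      rw [← mul_assoc, ENNReal.inv_mul_cancel ha0 ENNReal.ofReal_ne_top, one_mul]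
    rw [h1, hainv]
    exact mul_le_mul_right hBle _
  have hEtop : eLpNorm h ⊤ volume ≠ ⊤ := by
    refine (hE.trans_lt ?_).ne
    exact ENNReal.mul_lt_top ENNReal.ofReal_lt_top (lt_top_iff_ne_top.2 hν)
  set M : ℝ := (eLpNorm h ⊤ volume).toReal with hMd
  have hM0 : 0 ≤ M := ENNReal.toReal_nonneg
  have hM : ∀ x, ‖h x‖ ≤ M := by
    intro x
    have h1 := cont_bound_sup conth x
    have h2 := ENNReal.toReal_mono hEtop h1
    simpa [hMd] using h2
  -- the Gaussian-weighted L² integral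
  set J : ℝ := ∫ ξ : Ed d, rexp (-b * ‖ξ‖^2) * ‖F ξ‖^2 with hJd
  have hFbound : ∀ ξ, ‖F ξ‖ ≤ (P Set.univ).toReal + (N Set.univ).toReal := by
    intro ξ
    rw [hFdef ξ]
    exact (norm_sub_le _ _).trans (add_le_add (norm_F_le P ξ) (norm_F_le N ξ))
  have hJint : Integrable (fun ξ : Ed d => rexp (-b * ‖ξ‖^2) * ‖F ξ‖^2) volume := by
    apply Integrable.mono'
      (g := fun ξ : Ed d => rexp (-b * ‖ξ‖^2) * ((P Set.univ).toReal + (N Set.univ).toReal)^2)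
    · exact (gauss_int d hb).mul_const _
    · apply Continuous.aestronglyMeasurable
      apply Continuous.mul
      · fun_prop
      · exact (contF.norm).pow 2
    · filter_upwards with ξ
      rw [Real.norm_eq_abs, abs_of_nonneg (by positivity)]
      have hFb := hFbound ξ
      have he : (0:ℝ) ≤ rexp (-b * ‖ξ‖^2) := (Real.exp_pos _).le
      have hn : (0:ℝ) ≤ ‖F ξ‖ := norm_nonneg _
      have hsq : ‖F ξ‖^2 ≤ ((P Set.univ).toReal + (N Set.univ).toReal)^2 := by nlinarith
      exact mul_le_mul_of_nonneg_left hsq he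
  -- complex identity
  have hptwise : ∀ ξ : Ed d, Complex.exp (-((b : ℝ) : ℂ) * ‖ξ‖^2) * (F ξ * (starRingEnd ℂ) (F ξ))
      = ((rexp (-b * ‖ξ‖^2) * ‖F ξ‖^2 : ℝ) : ℂ) := by
    intro ξ
    rw [Complex.mul_conj]
    have h1 : Complex.exp (-((b : ℝ) : ℂ) * ‖ξ‖^2) = ((rexp (-b * ‖ξ‖^2) : ℝ) : ℂ) := by
      rw [Complex.ofReal_exp]
      norm_cast
    rw [h1, Complex.normSq_eq_norm_sq]
    push_cast
    ring
  have hJC : (∫ ξ : Ed d, Complex.exp (-((b : ℝ) : ℂ) * ‖ξ‖^2) * (F ξ * (starRingEnd ℂ) (F ξ)))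
      = ((J : ℝ) : ℂ) := by
    rw [integral_congr_ae (Filter.Eventually.of_forall hptwise)]
    exact integral_ofReal
  -- expansion into four terms
  have hexpand : (∫ ξ : Ed d, Complex.exp (-((b : ℝ) : ℂ) * ‖ξ‖^2) * (F ξ * (starRingEnd ℂ) (F ξ)))
      = (∫ ξ : Ed d, Complex.exp (-((b : ℝ) : ℂ) * ‖ξ‖^2) *
          ((∫ x, phase x ξ ∂P) * (starRingEnd ℂ) (∫ y, phase y ξ ∂P)))
        - (∫ ξ : Ed d, Complex.exp (-((b : ℝ) : ℂ) * ‖ξ‖^2) *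
          ((∫ x, phase x ξ ∂P) * (starRingEnd ℂ) (∫ y, phase y ξ ∂N)))
        - (∫ ξ : Ed d, Complex.exp (-((b : ℝ) : ℂ) * ‖ξ‖^2) *
          ((∫ x, phase x ξ ∂N) * (starRingEnd ℂ) (∫ y, phase y ξ ∂P)))
        + (∫ ξ : Ed d, Complex.exp (-((b : ℝ) : ℂ) * ‖ξ‖^2) *
          ((∫ x, phase x ξ ∂N) * (starRingEnd ℂ) (∫ y, phase y ξ ∂N))) := by
    have hfun : (fun ξ : Ed d => Complex.exp (-((b : ℝ) : ℂ) * ‖ξ‖^2) *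
        (F ξ * (starRingEnd ℂ) (F ξ)))
        = fun ξ : Ed d =>
          Complex.exp (-((b : ℝ) : ℂ) * ‖ξ‖^2) *
            ((∫ x, phase x ξ ∂P) * (starRingEnd ℂ) (∫ y, phase y ξ ∂P))
          - Complex.exp (-((b : ℝ) : ℂ) * ‖ξ‖^2) *
            ((∫ x, phase x ξ ∂P) * (starRingEnd ℂ) (∫ y, phase y ξ ∂N))
          - Complex.exp (-((b : ℝ) : ℂ) * ‖ξ‖^2) *
            ((∫ x, phase x ξ ∂N) * (starRingEnd ℂ) (∫ y, phase y ξ ∂P))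
          + Complex.exp (-((b : ℝ) : ℂ) * ‖ξ‖^2) *
            ((∫ x, phase x ξ ∂N) * (starRingEnd ℂ) (∫ y, phase y ξ ∂N)) := by
      funext ξ
      rw [hFdef ξ, map_sub]
      ring
    have eq1 : (∫ ξ : Ed d,
        (Complex.exp (-((b : ℝ) : ℂ) * ‖ξ‖^2) *
            ((∫ x, phase x ξ ∂P) * (starRingEnd ℂ) (∫ y, phase y ξ ∂P))
          - Complex.exp (-((b : ℝ) : ℂ) * ‖ξ‖^2) *
            ((∫ x, phase x ξ ∂P) * (starRingEnd ℂ) (∫ y, phase y ξ ∂N))))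
        = (∫ ξ : Ed d, Complex.exp (-((b : ℝ) : ℂ) * ‖ξ‖^2) *
            ((∫ x, phase x ξ ∂P) * (starRingEnd ℂ) (∫ y, phase y ξ ∂P)))
          - (∫ ξ : Ed d, Complex.exp (-((b : ℝ) : ℂ) * ‖ξ‖^2) *
            ((∫ x, phase x ξ ∂P) * (starRingEnd ℂ) (∫ y, phase y ξ ∂N))) :=
      integral_sub (tInt hb P P) (tInt hb P N)
    have eq2 : (∫ ξ : Ed d,
        (Complex.exp (-((b : ℝ) : ℂ) * ‖ξ‖^2) *
            ((∫ x, phase x ξ ∂P) * (starRingEnd ℂ) (∫ y, phase y ξ ∂P))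
          - Complex.exp (-((b : ℝ) : ℂ) * ‖ξ‖^2) *
            ((∫ x, phase x ξ ∂P) * (starRingEnd ℂ) (∫ y, phase y ξ ∂N))
          - Complex.exp (-((b : ℝ) : ℂ) * ‖ξ‖^2) *
            ((∫ x, phase x ξ ∂N) * (starRingEnd ℂ) (∫ y, phase y ξ ∂P))))
        = (∫ ξ : Ed d,
            (Complex.exp (-((b : ℝ) : ℂ) * ‖ξ‖^2) *
              ((∫ x, phase x ξ ∂P) * (starRingEnd ℂ) (∫ y, phase y ξ ∂P))
            - Complex.exp (-((b : ℝ) : ℂ) * ‖ξ‖^2) *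
              ((∫ x, phase x ξ ∂P) * (starRingEnd ℂ) (∫ y, phase y ξ ∂N))))
          - (∫ ξ : Ed d, Complex.exp (-((b : ℝ) : ℂ) * ‖ξ‖^2) *
            ((∫ x, phase x ξ ∂N) * (starRingEnd ℂ) (∫ y, phase y ξ ∂P))) :=
      integral_sub ((tInt hb P P).sub (tInt hb P N)) (tInt hb N P)
    have eq3 : (∫ ξ : Ed d,
        (Complex.exp (-((b : ℝ) : ℂ) * ‖ξ‖^2) *
            ((∫ x, phase x ξ ∂P) * (starRingEnd ℂ) (∫ y, phase y ξ ∂P))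
          - Complex.exp (-((b : ℝ) : ℂ) * ‖ξ‖^2) *
            ((∫ x, phase x ξ ∂P) * (starRingEnd ℂ) (∫ y, phase y ξ ∂N))
          - Complex.exp (-((b : ℝ) : ℂ) * ‖ξ‖^2) *
            ((∫ x, phase x ξ ∂N) * (starRingEnd ℂ) (∫ y, phase y ξ ∂P))
          + Complex.exp (-((b : ℝ) : ℂ) * ‖ξ‖^2) *
            ((∫ x, phase x ξ ∂N) * (starRingEnd ℂ) (∫ y, phase y ξ ∂N))))
        = (∫ ξ : Ed d,
            (Complex.exp (-((b : ℝ) : ℂ) * ‖ξ‖^2) *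
              ((∫ x, phase x ξ ∂P) * (starRingEnd ℂ) (∫ y, phase y ξ ∂P))
            - Complex.exp (-((b : ℝ) : ℂ) * ‖ξ‖^2) *
              ((∫ x, phase x ξ ∂P) * (starRingEnd ℂ) (∫ y, phase y ξ ∂N))
            - Complex.exp (-((b : ℝ) : ℂ) * ‖ξ‖^2) *
              ((∫ x, phase x ξ ∂N) * (starRingEnd ℂ) (∫ y, phase y ξ ∂P))))
          + (∫ ξ : Ed d, Complex.exp (-((b : ℝ) : ℂ) * ‖ξ‖^2) *
            ((∫ x, phase x ξ ∂N) * (starRingEnd ℂ) (∫ y, phase y ξ ∂N))) :=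
      integral_add (((tInt hb P P).sub (tInt hb P N)).sub (tInt hb N P)) (tInt hb N N)
    rw [hfun, eq3, eq2, eq1]
  have hKPP := keyK d ht P P
  have hKPN := keyK d ht P N
  have hKNP := keyK d ht N P
  have hKNN := keyK d ht N N
  have hJeq : J = (∫ x, ∫ y, heatKernel d s (x - y) ∂P ∂P)
      - (∫ x, ∫ y, heatKernel d s (x - y) ∂N ∂P)
      - (∫ x, ∫ y, heatKernel d s (x - y) ∂P ∂N)
      + (∫ x, ∫ y, heatKernel d s (x - y) ∂N ∂N) := by
    have := hJC.symm.trans hexpand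
    rw [hKPP, hKPN, hKNP, hKNN] at this
    rw [hsd]
    exact_mod_cast this
  -- rewrite as integrals of h
  have hJh : J = (∫ x, h x ∂P) - (∫ x, h x ∂N) := by
    rw [hJeq]
    have h1 : (∫ x, h x ∂P) = (∫ x, ∫ y, heatKernel d s (x - y) ∂P ∂P)
        - (∫ x, ∫ y, heatKernel d s (x - y) ∂N ∂P) := by
      rw [← integral_sub (int_conv hs P P) (int_conv hs N P)]
      exact integral_congr_ae (Filter.Eventually.of_forall fun x => hhdef x)
    have h2 : (∫ x, h x ∂N) = (∫ x, ∫ y, heatKernel d s (x - y) ∂P ∂N)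
        - (∫ x, ∫ y, heatKernel d s (x - y) ∂N ∂N) := by
      rw [← integral_sub (int_conv hs P N) (int_conv hs N N)]
      exact integral_congr_ae (Filter.Eventually.of_forall fun x => hhdef x)
    rw [h1, h2]
    ring
  -- bound J
  have hnormP : ‖∫ x, h x ∂P‖ ≤ M * (P Set.univ).toReal :=
    norm_integral_le_of_norm_le_const (Filter.Eventually.of_forall fun x => hM x)
  have hnormN : ‖∫ x, h x ∂N‖ ≤ M * (N Set.univ).toReal :=
    norm_integral_le_of_norm_le_const (Filter.Eventually.of_forall fun x => hM x)
  have hJle : J ≤ M * ((P Set.univ).toReal + (N Set.univ).toReal) := by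
    rw [hJh]
    rw [Real.norm_eq_abs] at hnormP hnormN
    have e1 := le_abs_self (∫ x, h x ∂P)
    have e2 := neg_abs_le (∫ x, h x ∂N)
    nlinarith
  -- total variation
  have hTV : ENNReal.ofReal ((P Set.univ).toReal + (N Set.univ).toReal)
      = ν.totalVariation Set.univ := by
    rw [ENNReal.ofReal_add ENNReal.toReal_nonneg ENNReal.toReal_nonneg,
      ENNReal.ofReal_toReal (measure_ne_top _ _), ENNReal.ofReal_toReal (measure_ne_top _ _)]
    rfl
  -- the lintegral chain
  have hball : ∀ ξ ∈ Metric.ball (0 : Ed d) R,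
      ‖F ξ‖^2 ≤ rexp (8 * π^2) * (rexp (-b * ‖ξ‖^2) * ‖F ξ‖^2) := by
    intro ξ hξ
    rw [mem_ball_zero_iff] at hξ
    have hξ2 : ‖ξ‖^2 ≤ R^2 := by nlinarith [norm_nonneg ξ]
    have hbb : b * ‖ξ‖^2 ≤ 8 * π^2 := by
      have hR2 : (0:ℝ) < R^2 := by positivity
      have hx : (R^2)⁻¹ * ‖ξ‖^2 ≤ 1 := by
        rw [← div_eq_inv_mul, div_le_one hR2]
        exact hξ2
      have h8 : (0:ℝ) ≤ 8*π^2 := by positivity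
      have hrw : b * ‖ξ‖^2 = 8*π^2 * ((R^2)⁻¹ * ‖ξ‖^2) := by rw [hbd, htd]; ring
      rw [hrw]
      calc 8*π^2 * ((R^2)⁻¹ * ‖ξ‖^2) ≤ 8*π^2 * 1 := mul_le_mul_of_nonneg_left hx h8
        _ = 8*π^2 := mul_one _
    have h1 : (1:ℝ) ≤ rexp (8 * π^2) * rexp (-b * ‖ξ‖^2) := by
      rw [← Real.exp_add]
      apply Real.one_le_exp
      linarith
    nlinarith [sq_nonneg ‖F ξ‖, norm_nonneg (F ξ)]
  calc (∫⁻ ξ in Metric.ball (0 : Ed d) R, ENNReal.ofReal (‖F ξ‖ ^ 2))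
      ≤ ∫⁻ ξ in Metric.ball (0 : Ed d) R,
          ENNReal.ofReal (rexp (8 * π^2) * (rexp (-b * ‖ξ‖^2) * ‖F ξ‖^2)) := by
        apply lintegral_mono_ae
        filter_upwards [ae_restrict_mem Metric.isOpen_ball.measurableSet] with ξ hξ
        exact ENNReal.ofReal_le_ofReal (hball ξ hξ)
    _ ≤ ∫⁻ ξ : Ed d, ENNReal.ofReal (rexp (8 * π^2) * (rexp (-b * ‖ξ‖^2) * ‖F ξ‖^2)) :=
        setLIntegral_le_lintegral _ _
    _ = ENNReal.ofReal (rexp (8 * π^2)) *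
          ∫⁻ ξ : Ed d, ENNReal.ofReal (rexp (-b * ‖ξ‖^2) * ‖F ξ‖^2) := by
        rw [lintegral_congr (fun ξ : Ed d =>
          ENNReal.ofReal_mul (p := rexp (8 * π^2)) (q := rexp (-b * ‖ξ‖^2) * ‖F ξ‖^2)
            (Real.exp_pos _).le)]
        rw [lintegral_const_mul' _ _ ENNReal.ofReal_ne_top]
    _ = ENNReal.ofReal (rexp (8 * π^2)) * ENNReal.ofReal J := by
        rw [← ofReal_integral_eq_lintegral_ofReal hJint
          (Filter.Eventually.of_forall fun ξ => by positivity)]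
    _ ≤ ENNReal.ofReal (rexp (8 * π^2)) *
          (eLpNorm h ⊤ volume * ν.totalVariation Set.univ) := by
        apply mul_le_mul_right
        calc ENNReal.ofReal J
            ≤ ENNReal.ofReal (M * ((P Set.univ).toReal + (N Set.univ).toReal)) :=
              ENNReal.ofReal_le_ofReal hJle
          _ = ENNReal.ofReal M *
                ENNReal.ofReal ((P Set.univ).toReal + (N Set.univ).toReal) :=
              ENNReal.ofReal_mul hM0
          _ = eLpNorm h ⊤ volume * ν.totalVariation Set.univ := by
              rw [hTV, hMd, ENNReal.ofReal_toReal hEtop]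
    _ ≤ ENNReal.ofReal (rexp (8 * π^2)) *
          ((ENNReal.ofReal (s ^ (-γ)) * besovNorm d β ν) * ν.totalVariation Set.univ) := by
        apply mul_le_mul_right
        exact mul_le_mul_left hE _
    _ = ENNReal.ofReal (rexp (8 * π^2) * s ^ (-γ)) * ν.totalVariation Set.univ *
          besovNorm d β ν := by
        rw [ENNReal.ofReal_mul (Real.exp_pos _).le]
        have habs : ∀ (A B C D : ℝ≥0∞), A * ((B * C) * D) = A * B * D * C := fun A B C D => by
          ring
        exact habs _ _ _ _
    _ = ENNReal.ofReal (rexp (8 * π^2) * 2 ^ (-(((d:ℝ) - β) / 2)) * R ^ ((d:ℝ) - β)) *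
          ν.totalVariation Set.univ * besovNorm d β ν := by
        have hre : rexp (8 * π^2) * s ^ (-γ)
            = rexp (8 * π^2) * 2 ^ (-(((d:ℝ) - β) / 2)) * R ^ ((d:ℝ) - β) := by
          rw [hsd, htd, s_pow hR γ, hγd]
          have h2γ : 2 * (((d:ℝ) - β) / 2) = (d:ℝ) - β := by ring
          rw [h2γ]
          ring
        rw [hre]
end
end

section
/- Let d ≥ 1, β ∈ ℝ, and let μ be a finite signed Borel measure on ℝ^d with ‖μ‖_B := sup_{t>0} t^{(d−β)/2} ‖p_t ∗ μ‖_{L^∞} < ∞. Then for every t > 0, t^{(d−β)/2} ∫_{ℝ^d} exp(−8π² t |ξ|²) |μ̂(ξ)|² dξ ≤ ‖μ‖ ‖μ‖_B. -/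
open MeasureTheory Real
open scoped ENNReal

noncomputable section

set_option maxHeartbeats 1000000

variable {d : ℕ} {t : ℝ}

lemma hk_nonneg (ht : 0 < t) (x : Ed d) : 0 ≤ heatKernel d t x := by
  unfold heatKernel; positivity

lemma hk_le (ht : 0 < t) (x : Ed d) : heatKernel d t x ≤ (4 * π * t) ^ (-(d : ℝ) / 2) := by
  unfold heatKernel
  have h1 : Real.exp (-‖x‖ ^ 2 / (4 * t)) ≤ 1 := by
    rw [Real.exp_le_one_iff]
    have : (0:ℝ) ≤ ‖x‖ ^ 2 / (4 * t) := by positivity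
    linarith [neg_div (4*t) (‖x‖^2)]
  have h2 : (0:ℝ) ≤ (4 * π * t) ^ (-(d : ℝ) / 2) := by positivity
  nlinarith

lemma hk_symm (x y : Ed d) : heatKernel d t (x - y) = heatKernel d t (y - x) := by
  unfold heatKernel; rw [norm_sub_rev]

lemma hk_continuous (ht : 0 < t) : Continuous (heatKernel d t) := by
  unfold heatKernel
  fun_prop

lemma hk_eq (ht : 0 < t) (x : Ed d) :
    heatKernel d t x = (4 * π * t) ^ (-(d : ℝ) / 2) * Real.exp (-(1/(4*t)) * ‖x‖ ^ 2) := by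
  unfold heatKernel
  congr 1
  ring_nf

lemma integrable_gauss {b : ℝ} (hb : 0 < b) :
    Integrable (fun x : Ed d => Real.exp (-b * ‖x‖ ^ 2)) := by
  have := (GaussianFourier.integrable_cexp_neg_mul_sq_norm_add (V := Ed d)
    (b := (b:ℂ)) (by simpa using hb) 0 0).norm
  refine this.congr (Filter.Eventually.of_forall fun x => ?_)
  simp [Complex.norm_exp]
  norm_cast
  left; rfl

lemma hk_integrable (ht : 0 < t) : Integrable (heatKernel d t) := by
  have h := (integrable_gauss (d := d) (b := 1/(4*t)) (by positivity)).const_mul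
    ((4 * π * t) ^ (-(d : ℝ) / 2))
  refine h.congr (Filter.Eventually.of_forall fun x => ?_)
  rw [hk_eq ht]

lemma integral_hk (ht : 0 < t) : ∫ x : Ed d, heatKernel d t x = 1 := by
  simp_rw [hk_eq ht]
  rw [integral_const_mul,
    GaussianFourier.integral_rexp_neg_mul_sq_norm (by positivity : (0:ℝ) < 1/(4*t)),
    finrank_euclideanSpace_fin]
  have h1 : π / (1/(4*t)) = 4 * π * t := by field_simp
  rw [h1, ← Real.rpow_add (by positivity), neg_div, neg_add_cancel, Real.rpow_zero]

open scoped RealInnerProductSpace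

lemma gauss_fourier (ht : 0 < t) (w : Ed d) :
    ∫ ξ : Ed d, (Real.exp (-(8*π^2*t)*‖ξ‖^2) : ℂ) *
        Complex.exp (-(2 * π * Complex.I) * ((inner ℝ w ξ : ℝ) : ℂ))
      = (heatKernel d (2*t) w : ℂ) := by
  have hb : 0 < (((8*π^2*t : ℝ)):ℂ).re := by
    rw [Complex.ofReal_re]; positivity
  have h1 : ∀ ξ : Ed d, (Real.exp (-(8*π^2*t)*‖ξ‖^2) : ℂ) *
      Complex.exp (-(2 * π * Complex.I) * ((inner ℝ w ξ : ℝ) : ℂ))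
      = Complex.exp (-((8*π^2*t : ℝ):ℂ) * ‖ξ‖^2 + (-(2 * π * Complex.I)) * ((inner ℝ w ξ : ℝ) : ℂ)) := by
    intro ξ
    rw [Complex.ofReal_exp, ← Complex.exp_add]
    congr 1
    push_cast
    ring
  simp_rw [h1]
  rw [GaussianFourier.integral_cexp_neg_mul_sq_norm_add hb (-(2 * π * Complex.I)) w, finrank_euclideanSpace_fin]
  have hπ : (π:ℝ) ≠ 0 := pi_ne_zero
  have ht' : t ≠ 0 := ht.ne'
  have h2 : (-(2 * (π:ℂ) * Complex.I))^2 * (‖w‖:ℂ)^2 / (4 * ((8*π^2*t : ℝ):ℂ))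
      = ((-‖w‖^2/(4*(2*t)) : ℝ) : ℂ) := by
    have h0 : (-(2 * (π:ℂ) * Complex.I))^2 = -(4*π^2) := by
      rw [show (-(2 * (π:ℂ) * Complex.I))^2 = (2*π)^2 * Complex.I^2 by ring, Complex.I_sq]
      ring
    rw [h0]
    push_cast
    have hA : ((4:ℂ)*(8*(π:ℂ)^2*(t:ℂ))) ≠ 0 := by
      rw [show ((4:ℂ)*(8*(π:ℂ)^2*(t:ℂ))) = ((4*(8*π^2*t):ℝ):ℂ) by push_cast; ring]
      exact Complex.ofReal_ne_zero.2 (by positivity)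
    have hC : ((4:ℂ)*(2*(t:ℂ))) ≠ 0 := by
      rw [show ((4:ℂ)*(2*(t:ℂ))) = ((4*(2*t):ℝ):ℂ) by push_cast; ring]
      exact Complex.ofReal_ne_zero.2 (by positivity)
    rw [div_eq_div_iff hA hC]
    ring
  have h3 : ((π:ℂ) / ((8*π^2*t : ℝ):ℂ)) = ((1/(8*π*t) : ℝ) : ℂ) := by
    push_cast
    have hπ' : (π:ℂ) ≠ 0 := Complex.ofReal_ne_zero.2 pi_ne_zero
    have ht'' : (t:ℂ) ≠ 0 := Complex.ofReal_ne_zero.2 ht'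
    field_simp
  have h4 : ((d:ℂ) / 2) = (((d:ℝ)/2 : ℝ) : ℂ) := by push_cast; ring
  rw [h2, h3, h4, ← Complex.ofReal_cpow (by positivity) ((d:ℝ)/2), ← Complex.ofReal_exp,
    ← Complex.ofReal_mul]
  norm_cast
  unfold heatKernel
  congr 1
  rw [show 4 * π * (2*t) = 8 * π * t by ring, one_div, Real.inv_rpow (by positivity),
    ← Real.rpow_neg (by positivity), neg_div]

lemma hk_conv (ht : 0 < t) (x y : Ed d) :
    ∫ z : Ed d, heatKernel d t (x - z) * heatKernel d t (z - y)
      = heatKernel d (2*t) (x - y) := by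
  have hm : ∀ z : Ed d, heatKernel d t (x - z) * heatKernel d t (z - y)
      = ((4*π*t) ^ (-(d:ℝ)/2) * (4*π*t) ^ (-(d:ℝ)/2) * Real.exp (-‖x-y‖^2/(8*t)))
        * Real.exp (-(1/(2*t)) * ‖z - (2:ℝ)⁻¹ • (x+y)‖^2) := by
    intro z
    have harg : -‖x-z‖^2/(4*t) + -‖z-y‖^2/(4*t)
        = -‖x-y‖^2/(8*t) + -(1/(2*t)) * ‖z - (2:ℝ)⁻¹ • (x+y)‖^2 := by
      set u := z - (2:ℝ)⁻¹ • (x + y) with hu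
      have hxz : x - z = (2:ℝ)⁻¹ • (x - y) - u := by rw [hu]; module
      have hzy : z - y = (2:ℝ)⁻¹ • (x - y) + u := by rw [hu]; module
      have hn : ‖(2:ℝ)⁻¹ • (x - y)‖ = 2⁻¹ * ‖x - y‖ := by
        rw [norm_smul]; simp
      have hpar := parallelogram_law_with_norm ℝ ((2:ℝ)⁻¹ • (x - y)) u
      rw [hn] at hpar
      have key : ‖(2:ℝ)⁻¹ • (x-y) - u‖^2 + ‖(2:ℝ)⁻¹ • (x-y) + u‖^2
          = ‖x-y‖^2/2 + 2*‖u‖^2 := by nlinarith [hpar]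
      rw [hxz, hzy, ← add_div, ← neg_add, key]
      have ht' : t ≠ 0 := ht.ne'
      field_simp
      ring
    unfold heatKernel
    calc (4*π*t : ℝ) ^ (-(d:ℝ)/2) * Real.exp (-‖x-z‖^2/(4*t))
        * ((4*π*t : ℝ) ^ (-(d:ℝ)/2) * Real.exp (-‖z-y‖^2/(4*t)))
        = (4*π*t : ℝ) ^ (-(d:ℝ)/2) * (4*π*t) ^ (-(d:ℝ)/2)
          * Real.exp (-‖x-z‖^2/(4*t) + -‖z-y‖^2/(4*t)) := by
          rw [Real.exp_add]; ring
      _ = _ := by rw [harg, Real.exp_add]; ring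
  simp_rw [hm]
  rw [integral_const_mul]
  have hshift : ∫ a : Ed d, Real.exp (-(1/(2*t)) * ‖a - (2:ℝ)⁻¹ • (x+y)‖^2)
      = ∫ v : Ed d, Real.exp (-(1/(2*t)) * ‖v‖^2) :=
    integral_sub_right_eq_self (fun v : Ed d => Real.exp (-(1/(2*t)) * ‖v‖^2)) _
  rw [hshift, GaussianFourier.integral_rexp_neg_mul_sq_norm (by positivity : (0:ℝ) < 1/(2*t)),
    finrank_euclideanSpace_fin]
  have h1 : π / (1/(2*t)) = 2*π*t := by field_simp
  rw [h1]
  unfold heatKernel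
  have h2 : -‖x-y‖^2/(8*t) = -‖x-y‖^2/(4*(2*t)) := by ring_nf
  have h3 : (4*π*t : ℝ) ^ (-(d:ℝ)/2) * (4*π*t) ^ (-(d:ℝ)/2) * ((2*π*t) ^ ((d:ℝ)/2))
      = (4*π*(2*t)) ^ (-(d:ℝ)/2) := by
    have e1 : ((2*π*t : ℝ)) ^ ((d:ℝ)/2) = ((2*π*t : ℝ)⁻¹) ^ (-(d:ℝ)/2) := by
      rw [show (-(d:ℝ)/2) = -((d:ℝ)/2) by ring, Real.rpow_neg (by positivity),
        Real.inv_rpow (by positivity), inv_inv]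
    rw [e1, ← Real.mul_rpow (by positivity) (by positivity),
      ← Real.mul_rpow (by positivity) (by positivity)]
    congr 1
    have ht' : t ≠ 0 := ht.ne'
    field_simp
    ring
  calc (4*π*t : ℝ) ^ (-(d:ℝ)/2) * (4*π*t) ^ (-(d:ℝ)/2) * Real.exp (-‖x-y‖^2/(8*t))
        * ((2*π*t) ^ ((d:ℝ)/2))
      = ((4*π*t : ℝ) ^ (-(d:ℝ)/2) * (4*π*t) ^ (-(d:ℝ)/2) * ((2*π*t) ^ ((d:ℝ)/2)))
        * Real.exp (-‖x-y‖^2/(8*t)) := by ring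
    _ = (4*π*(2*t)) ^ (-(d:ℝ)/2) * Real.exp (-‖x-y‖^2/(4*(2*t))) := by rw [h3, h2]

set_option maxHeartbeats 1000000

def eker {d : ℕ} (w ξ : Ed d) : ℂ :=
  Complex.exp (-(2 * π * Complex.I) * ((inner ℝ w ξ : ℝ) : ℂ))

lemma eker_cont : Continuous (fun p : Ed d × Ed d => eker p.1 p.2) := by
  unfold eker
  have h1 : Continuous fun p : Ed d × Ed d => ((inner ℝ p.1 p.2 : ℝ) : ℂ) :=
    Complex.continuous_ofReal.comp continuous_inner
  exact Complex.continuous_exp.comp (continuous_const.mul h1)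

lemma eker_norm (w ξ : Ed d) : ‖eker w ξ‖ = 1 := by
  unfold eker
  rw [Complex.norm_exp]
  simp

lemma eker_mul_conj (x y ξ : Ed d) :
    eker x ξ * (starRingEnd ℂ) (eker y ξ) = eker (x - y) ξ := by
  unfold eker
  rw [← Complex.exp_conj, ← Complex.exp_add]
  congr 1
  simp only [map_mul, map_neg, Complex.conj_ofReal, Complex.conj_I, map_ofNat]
  rw [inner_sub_left]
  push_cast
  ring

lemma eker_cont_left (ξ : Ed d) : Continuous fun x : Ed d => eker x ξ := by
  unfold eker
  have h1 : Continuous fun x : Ed d => ((inner ℝ x ξ : ℝ) : ℂ) :=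
    Complex.continuous_ofReal.comp (continuous_id.inner continuous_const)
  exact Complex.continuous_exp.comp (continuous_const.mul h1)

lemma eker_cont_right (x : Ed d) : Continuous fun ξ : Ed d => eker x ξ := by
  unfold eker
  have h1 : Continuous fun ξ : Ed d => ((inner ℝ x ξ : ℝ) : ℂ) :=
    Complex.continuous_ofReal.comp (continuous_const.inner continuous_id)
  exact Complex.continuous_exp.comp (continuous_const.mul h1)

lemma eker_cont_pair : Continuous fun z : Ed d × (Ed d × Ed d) =>
    eker (z.2.1 - z.2.2) z.1 := by
  unfold eker
  have h0 : Continuous fun z : Ed d × (Ed d × Ed d) => (inner ℝ (z.2.1 - z.2.2) z.1 : ℝ) :=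
    Continuous.inner (by fun_prop) (by fun_prop)
  exact Complex.continuous_exp.comp (continuous_const.mul (Complex.continuous_ofReal.comp h0))

lemma cgauss_cont (b : ℝ) : Continuous fun ξ : Ed d => (Real.exp (-b*‖ξ‖^2) : ℂ) := by
  have : Continuous fun ξ : Ed d => Real.exp (-b*‖ξ‖^2) := by fun_prop
  exact Complex.continuous_ofReal.comp this

section meas

variable (κ lam : Measure (Ed d)) [IsFiniteMeasure κ] [IsFiniteMeasure lam]

lemma F_cont : Continuous (fun ξ : Ed d => ∫ x, eker x ξ ∂κ) := by
  apply continuous_of_dominated (bound := fun _ => (1:ℝ))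
  · exact fun ξ => (eker_cont_left ξ).aestronglyMeasurable
  · exact fun ξ => Filter.Eventually.of_forall fun x => le_of_eq (eker_norm x ξ)
  · exact integrable_const 1
  · exact Filter.Eventually.of_forall fun x => eker_cont_right x

lemma F_bound (ξ : Ed d) : ‖∫ x, eker x ξ ∂κ‖ ≤ (κ Set.univ).toReal := by
  calc ‖∫ x, eker x ξ ∂κ‖ ≤ ∫ x, ‖eker x ξ‖ ∂κ := norm_integral_le_integral_norm _
    _ = ∫ _x, (1:ℝ) ∂κ := by simp_rw [eker_norm]
    _ = (κ Set.univ).toReal := by simp [Measure.real]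

lemma claimA (ht : 0 < t) :
    ∫ ξ : Ed d, (Real.exp (-(8*π^2*t)*‖ξ‖^2) : ℂ) * (∫ x, eker x ξ ∂κ)
        * (starRingEnd ℂ) (∫ y, eker y ξ ∂lam)
      = ((∫ p, heatKernel d (2*t) (p.1 - p.2) ∂(κ.prod lam) : ℝ) : ℂ) := by
  have step1 : ∀ ξ : Ed d, (Real.exp (-(8*π^2*t)*‖ξ‖^2) : ℂ) * (∫ x, eker x ξ ∂κ)
        * (starRingEnd ℂ) (∫ y, eker y ξ ∂lam)
      = ∫ p, (Real.exp (-(8*π^2*t)*‖ξ‖^2) : ℂ) * eker (p.1 - p.2) ξ ∂(κ.prod lam) := by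
    intro ξ
    rw [← integral_conj, mul_assoc, ← integral_prod_mul, ← integral_const_mul]
    congr 1
    ext p
    rw [eker_mul_conj]
  simp_rw [step1]
  have hint : Integrable (Function.uncurry fun (ξ : Ed d) (p : Ed d × Ed d) =>
      (Real.exp (-(8*π^2*t)*‖ξ‖^2) : ℂ) * eker (p.1 - p.2) ξ)
      (volume.prod (κ.prod lam)) := by
    have hb : (0:ℝ) < 8*π^2*t := by positivity
    have hmeas : AEStronglyMeasurable (Function.uncurry fun (ξ : Ed d) (p : Ed d × Ed d) =>
        (Real.exp (-(8*π^2*t)*‖ξ‖^2) : ℂ) * eker (p.1 - p.2) ξ) (volume.prod (κ.prod lam)) := by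
      apply Continuous.aestronglyMeasurable
      have c1 : Continuous fun z : Ed d × (Ed d × Ed d) =>
          (Real.exp (-(8*π^2*t)*‖z.1‖^2) : ℂ) :=
        Complex.continuous_ofReal.comp (by fun_prop)
      exact c1.mul eker_cont_pair
    have hgauss : Integrable (fun z : Ed d × (Ed d × Ed d) =>
        Real.exp (-(8*π^2*t)*‖z.1‖^2) * (1:ℝ)) (volume.prod (κ.prod lam)) :=
      (integrable_gauss hb).mul_prod (integrable_const 1)
    refine (hgauss.norm.mono' hmeas ?_)
    refine Filter.Eventually.of_forall fun z => ?_
    rw [Function.uncurry_def]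
    rw [norm_mul, Complex.norm_real, eker_norm]
    simp [abs_of_nonneg (Real.exp_nonneg _)]
  rw [integral_integral_swap hint]
  have step2 : ∀ p : Ed d × Ed d,
      (∫ ξ : Ed d, (Real.exp (-(8*π^2*t)*‖ξ‖^2) : ℂ) * eker (p.1 - p.2) ξ)
        = ((heatKernel d (2*t) (p.1 - p.2) : ℝ) : ℂ) := fun p => gauss_fourier ht (p.1 - p.2)
  simp_rw [step2]
  exact integral_ofReal

lemma hk_shift_int (ht : 0 < t) (x : Ed d) :
    Integrable (fun z : Ed d => heatKernel d t (z - x)) volume :=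
  (hk_integrable ht).comp_sub_right x

lemma hk_shift_integral (ht : 0 < t) (x : Ed d) :
    ∫ z : Ed d, heatKernel d t (z - x) = 1 := by
  rw [integral_sub_right_eq_self (heatKernel d t) x]
  exact integral_hk ht

lemma hk_shift_cont (ht : 0 < t) (x : Ed d) :
    Continuous (fun z : Ed d => heatKernel d t (z - x)) :=
  (hk_continuous ht).comp (by fun_prop)

lemma hk_shift_cont' (ht : 0 < t) (x : Ed d) :
    Continuous (fun z : Ed d => heatKernel d t (x - z)) :=
  (hk_continuous ht).comp (by fun_prop)

lemma hkprod_int (ht : 0 < t) :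
    Integrable (Function.uncurry fun (x : Ed d) (z : Ed d) => heatKernel d t (z - x))
      (κ.prod volume) := by
  have hmeas : AEStronglyMeasurable
      (Function.uncurry fun (x : Ed d) (z : Ed d) => heatKernel d t (z - x))
      (κ.prod volume) := by
    apply Continuous.aestronglyMeasurable
    exact (hk_continuous ht).comp (continuous_snd.sub continuous_fst)
  rw [integrable_prod_iff hmeas]
  constructor
  · exact Filter.Eventually.of_forall fun x => hk_shift_int ht x
  · have he : ∀ x : Ed d, (∫ z, ‖heatKernel d t (z - x)‖) = 1 := by
      intro x
      rw [← hk_shift_integral ht x]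
      congr 1
      ext z
      exact Real.norm_of_nonneg (hk_nonneg ht _)
    simp only [Function.uncurry_def]
    refine (integrable_const (1:ℝ)).congr ?_
    exact Filter.Eventually.of_forall fun x => (he x).symm

lemma P_nonneg (ht : 0 < t) (z : Ed d) : 0 ≤ ∫ x, heatKernel d t (z - x) ∂κ :=
  integral_nonneg fun x => hk_nonneg ht _

lemma P_bound (ht : 0 < t) (z : Ed d) :
    ∫ x, heatKernel d t (z - x) ∂κ ≤ (4*π*t) ^ (-(d:ℝ)/2) * (κ Set.univ).toReal := by
  calc ∫ x, heatKernel d t (z - x) ∂κ ≤ ∫ _x, (4*π*t) ^ (-(d:ℝ)/2) ∂κ := by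
        apply integral_mono ?_ (integrable_const _) (fun x => hk_le ht _)
        apply Integrable.mono' (g := fun _ => (4*π*t) ^ (-(d:ℝ)/2)) (integrable_const _)
          ((hk_shift_cont' ht z).aestronglyMeasurable)
        exact Filter.Eventually.of_forall fun x => by
          rw [Real.norm_of_nonneg (hk_nonneg ht _)]; exact hk_le ht _
    _ = (4*π*t) ^ (-(d:ℝ)/2) * (κ Set.univ).toReal := by simp [mul_comm, Measure.real]

lemma P_integrable (ht : 0 < t) :
    Integrable (fun z : Ed d => ∫ x, heatKernel d t (z - x) ∂κ) volume :=
  (hkprod_int κ ht).integral_prod_right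

lemma P_integral (ht : 0 < t) :
    ∫ z : Ed d, (∫ x, heatKernel d t (z - x) ∂κ) = (κ Set.univ).toReal := by
  rw [← integral_integral_swap (hkprod_int κ ht)]
  have : ∀ x : Ed d, (∫ z : Ed d, heatKernel d t (z - x)) = 1 :=
    fun x => hk_shift_integral ht x
  simp_rw [this]
  simp [Measure.real]

lemma claimB (ht : 0 < t) :
    ∫ p, heatKernel d (2*t) (p.1 - p.2) ∂(κ.prod lam)
      = ∫ z : Ed d, (∫ x, heatKernel d t (z - x) ∂κ) * (∫ y, heatKernel d t (z - y) ∂lam) := by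
  have h1 : ∀ p : Ed d × Ed d, heatKernel d (2*t) (p.1 - p.2)
      = ∫ z : Ed d, heatKernel d t (p.1 - z) * heatKernel d t (z - p.2) :=
    fun p => (hk_conv ht _ _).symm
  simp_rw [h1]
  have hmeas : AEStronglyMeasurable
      (Function.uncurry fun (p : Ed d × Ed d) (z : Ed d) =>
        heatKernel d t (p.1 - z) * heatKernel d t (z - p.2)) ((κ.prod lam).prod volume) := by
    apply Continuous.aestronglyMeasurable
    exact ((hk_continuous ht).comp (by fun_prop : Continuous fun q : (Ed d × Ed d) × Ed d =>
        q.1.1 - q.2)).mul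
      ((hk_continuous ht).comp (by fun_prop : Continuous fun q : (Ed d × Ed d) × Ed d =>
        q.2 - q.1.2))
  have hPsi : Integrable (Function.uncurry fun (p : Ed d × Ed d) (z : Ed d) =>
      heatKernel d t (p.1 - z) * heatKernel d t (z - p.2)) ((κ.prod lam).prod volume) := by
    rw [integrable_prod_iff hmeas]
    constructor
    · refine Filter.Eventually.of_forall fun p => ?_
      exact Integrable.bdd_mul (hk_shift_int ht p.2)
        (hk_shift_cont' ht p.1).aestronglyMeasurable
        (c := (4*π*t) ^ (-(d:ℝ)/2)) (Filter.Eventually.of_forall fun z => by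
          rw [Real.norm_of_nonneg (hk_nonneg ht _)]; exact hk_le ht _)
    · have he : ∀ p : Ed d × Ed d,
          (∫ z, ‖heatKernel d t (p.1 - z) * heatKernel d t (z - p.2)‖)
          = heatKernel d (2*t) (p.1 - p.2) := by
        intro p
        rw [← hk_conv ht p.1 p.2]
        congr 1
        ext z
        exact Real.norm_of_nonneg (mul_nonneg (hk_nonneg ht _) (hk_nonneg ht _))
      simp only [Function.uncurry_def]
      refine Integrable.congr ?_ (Filter.Eventually.of_forall fun p => (he p).symm)
      refine Integrable.mono' (integrable_const ((4*π*(2*t)) ^ (-(d:ℝ)/2)))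
        (Continuous.aestronglyMeasurable ?_) ?_
      · exact (hk_continuous (by positivity)).comp (continuous_fst.sub continuous_snd)
      · refine Filter.Eventually.of_forall fun p => ?_
        rw [Real.norm_of_nonneg (hk_nonneg (by positivity) _)]
        exact hk_le (by positivity) _
  rw [integral_integral_swap hPsi]
  congr 1
  ext z
  calc ∫ p, heatKernel d t (p.1 - z) * heatKernel d t (z - p.2) ∂(κ.prod lam)
      = ∫ p, (fun x => heatKernel d t (z - x)) p.1 * (fun y => heatKernel d t (z - y)) p.2
          ∂(κ.prod lam) := by
        congr 1
        ext p
        rw [hk_symm p.1 z]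
    _ = (∫ x, heatKernel d t (z - x) ∂κ) * ∫ y, heatKernel d t (z - y) ∂lam := by
        exact integral_prod_mul (fun x => heatKernel d t (z - x)) (fun y => heatKernel d t (z - y))

lemma PP_int (ht : 0 < t) : Integrable (fun z : Ed d =>
    (∫ x, heatKernel d t (z - x) ∂κ) * (∫ y, heatKernel d t (z - y) ∂lam)) volume := by
  refine Integrable.bdd_mul (P_integrable lam ht) (P_integrable κ ht).aestronglyMeasurable
    (c := (4*π*t) ^ (-(d:ℝ)/2) * (κ Set.univ).toReal) (Filter.Eventually.of_forall fun z => ?_)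
  rw [Real.norm_of_nonneg (P_nonneg κ ht z)]
  exact P_bound κ ht z

lemma claimA_int {b : ℝ} (hb : (0:ℝ) < b) :
    Integrable (fun ξ : Ed d => (Real.exp (-b*‖ξ‖^2) : ℂ) * (∫ x, eker x ξ ∂κ)
      * (starRingEnd ℂ) (∫ y, eker y ξ ∂lam)) volume := by
  refine Integrable.mono'
    ((integrable_gauss hb).const_mul ((κ Set.univ).toReal * (lam Set.univ).toReal)) ?_ ?_
  · apply Continuous.aestronglyMeasurable
    have hc : Continuous fun ξ : Ed d => (starRingEnd ℂ) (∫ y, eker y ξ ∂lam) :=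
      continuous_star.comp (F_cont lam)
    exact ((cgauss_cont b).mul (F_cont κ)).mul hc
  · refine Filter.Eventually.of_forall fun ξ => ?_
    rw [norm_mul, norm_mul, Complex.norm_real, RCLike.norm_conj,
      Real.norm_of_nonneg (Real.exp_nonneg _)]
    have h1 := F_bound κ ξ
    have h2 := F_bound lam ξ
    have h3 : ‖∫ x, eker x ξ ∂κ‖ * ‖∫ y, eker y ξ ∂lam‖
        ≤ (κ Set.univ).toReal * (lam Set.univ).toReal :=
      mul_le_mul h1 h2 (norm_nonneg _) ENNReal.toReal_nonneg
    calc Real.exp (-b*‖ξ‖^2) * ‖∫ x, eker x ξ ∂κ‖ * ‖∫ y, eker y ξ ∂lam‖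
        = Real.exp (-b*‖ξ‖^2) * (‖∫ x, eker x ξ ∂κ‖ * ‖∫ y, eker y ξ ∂lam‖) := by ring
      _ ≤ Real.exp (-b*‖ξ‖^2) * ((κ Set.univ).toReal * (lam Set.univ).toReal) :=
          mul_le_mul_of_nonneg_left h3 (Real.exp_nonneg _)
      _ = (κ Set.univ).toReal * (lam Set.univ).toReal * Real.exp (-b*‖ξ‖^2) := by ring

end meas

section main

variable (ν : MeasureTheory.SignedMeasure (Ed d))

lemma fourierSM_eq (ξ : Ed d) :
    fourierSM d ν ξ = (∫ x, eker x ξ ∂ν.toJordanDecomposition.posPart)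
      - ∫ x, eker x ξ ∂ν.toJordanDecomposition.negPart := rfl

lemma heatConv_eq (z : Ed d) :
    heatConv d t ν z = (∫ x, heatKernel d t (z - x) ∂ν.toJordanDecomposition.posPart)
      - ∫ x, heatKernel d t (z - x) ∂ν.toJordanDecomposition.negPart := rfl

lemma G_int (ht : 0 < t) : Integrable
    (fun ξ : Ed d => Real.exp (-(8 * π ^ 2 * t) * ‖ξ‖ ^ 2) * ‖fourierSM d ν ξ‖ ^ 2)
    volume := by
  set μp := ν.toJordanDecomposition.posPart
  set μm := ν.toJordanDecomposition.negPart
  have hb : (0:ℝ) < 8*π^2*t := by positivity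
  set C : ℝ := ((μp Set.univ).toReal + (μm Set.univ).toReal) with hC
  have hC0 : 0 ≤ C := by positivity
  refine Integrable.mono' ((integrable_gauss hb).const_mul (C^2)) ?_ ?_
  · apply Continuous.aestronglyMeasurable
    have h1 : Continuous fun ξ : Ed d => fourierSM d ν ξ := by
      simp_rw [fourierSM_eq ν]
      exact (F_cont μp).sub (F_cont μm)
    have h2 : Continuous fun ξ : Ed d => Real.exp (-(8*π^2*t)*‖ξ‖^2) := by fun_prop
    exact h2.mul ((h1.norm).pow 2)
  · refine Filter.Eventually.of_forall fun ξ => ?_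
    have hF : ‖fourierSM d ν ξ‖ ≤ C := by
      rw [fourierSM_eq ν]
      refine (norm_sub_le _ _).trans ?_
      exact add_le_add (F_bound μp ξ) (F_bound μm ξ)
    have h3 : ‖fourierSM d ν ξ‖^2 ≤ C^2 := by nlinarith [norm_nonneg (fourierSM d ν ξ)]
    rw [Real.norm_of_nonneg (mul_nonneg (Real.exp_nonneg _) (sq_nonneg _))]
    calc Real.exp (-(8*π^2*t)*‖ξ‖^2) * ‖fourierSM d ν ξ‖^2
        ≤ Real.exp (-(8*π^2*t)*‖ξ‖^2) * C^2 :=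
          mul_le_mul_of_nonneg_left h3 (Real.exp_nonneg _)
      _ = C^2 * Real.exp (-(8*π^2*t)*‖ξ‖^2) := by ring

lemma main_real (ht : 0 < t) :
    ∫ ξ : Ed d, Real.exp (-(8 * π ^ 2 * t) * ‖ξ‖ ^ 2) * ‖fourierSM d ν ξ‖ ^ 2
      = ∫ z : Ed d, (heatConv d t ν z)^2 := by
  set μp := ν.toJordanDecomposition.posPart
  set μm := ν.toJordanDecomposition.negPart
  have hb : (0:ℝ) < 8*π^2*t := by positivity
  -- pointwise complex identity
  have hpt : ∀ ξ : Ed d,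
      ((Real.exp (-(8*π^2*t)*‖ξ‖^2) * ‖fourierSM d ν ξ‖^2 : ℝ) : ℂ)
      = ((Real.exp (-(8*π^2*t)*‖ξ‖^2) : ℝ) : ℂ) * (∫ x, eker x ξ ∂μp)
          * (starRingEnd ℂ) (∫ y, eker y ξ ∂μp)
        - ((Real.exp (-(8*π^2*t)*‖ξ‖^2) : ℝ) : ℂ) * (∫ x, eker x ξ ∂μp)
          * (starRingEnd ℂ) (∫ y, eker y ξ ∂μm)
        - ((Real.exp (-(8*π^2*t)*‖ξ‖^2) : ℝ) : ℂ) * (∫ x, eker x ξ ∂μm)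
          * (starRingEnd ℂ) (∫ y, eker y ξ ∂μp)
        + ((Real.exp (-(8*π^2*t)*‖ξ‖^2) : ℝ) : ℂ) * (∫ x, eker x ξ ∂μm)
          * (starRingEnd ℂ) (∫ y, eker y ξ ∂μm) := by
    intro ξ
    have h0 : ((Real.exp (-(8*π^2*t)*‖ξ‖^2) * ‖fourierSM d ν ξ‖^2 : ℝ) : ℂ)
        = ((Real.exp (-(8*π^2*t)*‖ξ‖^2) : ℝ) : ℂ)
          * (fourierSM d ν ξ * (starRingEnd ℂ) (fourierSM d ν ξ)) := by
      rw [Complex.mul_conj, Complex.normSq_eq_norm_sq]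
      push_cast
      ring
    rw [h0, fourierSM_eq ν ξ, map_sub]
    ring
  -- complex integral equals real integral of G
  have hGC : ∫ ξ : Ed d, ((Real.exp (-(8*π^2*t)*‖ξ‖^2) * ‖fourierSM d ν ξ‖^2 : ℝ) : ℂ)
      = ((∫ ξ : Ed d, Real.exp (-(8*π^2*t)*‖ξ‖^2) * ‖fourierSM d ν ξ‖^2 : ℝ) : ℂ) :=
    integral_ofReal
  -- split complex integral into four pieces
  have hsplit : ∫ ξ : Ed d, ((Real.exp (-(8*π^2*t)*‖ξ‖^2) * ‖fourierSM d ν ξ‖^2 : ℝ) : ℂ)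
      = (((∫ p, heatKernel d (2*t) (p.1 - p.2) ∂(μp.prod μp) : ℝ) : ℂ)
          - ((∫ p, heatKernel d (2*t) (p.1 - p.2) ∂(μp.prod μm) : ℝ) : ℂ))
        - ((∫ p, heatKernel d (2*t) (p.1 - p.2) ∂(μm.prod μp) : ℝ) : ℂ)
        + ((∫ p, heatKernel d (2*t) (p.1 - p.2) ∂(μm.prod μm) : ℝ) : ℂ) := by
    simp_rw [hpt]
    rw [integral_add, integral_sub, integral_sub,
      claimA μp μp ht, claimA μp μm ht, claimA μm μp ht, claimA μm μm ht]
    · exact claimA_int μp μp hb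
    · exact claimA_int μp μm hb
    · exact (claimA_int μp μp hb).sub (claimA_int μp μm hb)
    · exact claimA_int μm μp hb
    · exact ((claimA_int μp μp hb).sub (claimA_int μp μm hb)).sub (claimA_int μm μp hb)
    · exact claimA_int μm μm hb
  -- pass to real equality
  have hreal : ∫ ξ : Ed d, Real.exp (-(8*π^2*t)*‖ξ‖^2) * ‖fourierSM d ν ξ‖^2
      = (∫ p, heatKernel d (2*t) (p.1 - p.2) ∂(μp.prod μp))
        - (∫ p, heatKernel d (2*t) (p.1 - p.2) ∂(μp.prod μm))
        - (∫ p, heatKernel d (2*t) (p.1 - p.2) ∂(μm.prod μp))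
        + (∫ p, heatKernel d (2*t) (p.1 - p.2) ∂(μm.prod μm)) := by
    have := hGC.symm.trans hsplit
    exact_mod_cast this
  rw [hreal, claimB μp μp ht, claimB μp μm ht, claimB μm μp ht, claimB μm μm ht]
  -- combine the four real integrals
  have hPP := PP_int μp μp ht
  have hPN := PP_int μp μm ht
  have hNP := PP_int μm μp ht
  have hNN := PP_int μm μm ht
  rw [← integral_sub hPP hPN, ← integral_sub, ← integral_add]
  rotate_left
  · exact (hPP.sub hPN).sub hNP
  · exact hNN
  · exact hPP.sub hPN
  · exact hNP
  refine integral_congr_ae (Filter.Eventually.of_forall fun z => ?_)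
  simp only [Pi.sub_apply, Pi.add_apply]
  rw [heatConv_eq ν z]
  ring


lemma f_int (ht : 0 < t) : Integrable (heatConv d t ν) volume := by
  refine (((P_integrable ν.toJordanDecomposition.posPart ht).sub
    (P_integrable ν.toJordanDecomposition.negPart ht)).congr ?_)
  exact Filter.Eventually.of_forall fun z => (heatConv_eq ν z).symm

lemma f_sq_int (ht : 0 < t) : Integrable (fun z : Ed d => (heatConv d t ν z)^2) volume := by
  set μp := ν.toJordanDecomposition.posPart
  set μm := ν.toJordanDecomposition.negPart
  refine ((((PP_int μp μp ht).sub (PP_int μp μm ht)).sub (PP_int μm μp ht)).add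
    (PP_int μm μm ht)).congr ?_
  refine Filter.Eventually.of_forall fun z => ?_
  simp only [Pi.sub_apply, Pi.add_apply]
  rw [heatConv_eq ν z]
  ring

lemma tv_toReal : (ν.totalVariation Set.univ).toReal
    = (ν.toJordanDecomposition.posPart Set.univ).toReal
      + (ν.toJordanDecomposition.negPart Set.univ).toReal := by
  have h : ν.totalVariation Set.univ
      = ν.toJordanDecomposition.posPart Set.univ + ν.toJordanDecomposition.negPart Set.univ := by
    rw [show ν.totalVariation
      = ν.toJordanDecomposition.posPart + ν.toJordanDecomposition.negPart from rfl,
      Measure.add_apply]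
  rw [h, ENNReal.toReal_add (measure_ne_top _ _) (measure_ne_top _ _)]

lemma f_sq_bound (ht : 0 < t) {M : ℝ} (hM : 0 ≤ M)
    (hae : ∀ᵐ z : Ed d ∂volume, |heatConv d t ν z| ≤ M) :
    ∫ z : Ed d, (heatConv d t ν z)^2 ≤ M * (ν.totalVariation Set.univ).toReal := by
  set μp := ν.toJordanDecomposition.posPart
  set μm := ν.toJordanDecomposition.negPart
  have habs : Integrable (fun z : Ed d => |heatConv d t ν z|) volume := (f_int ν ht).abs
  have step1 : ∫ z : Ed d, (heatConv d t ν z)^2 ≤ ∫ z : Ed d, M * |heatConv d t ν z| := by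
    refine integral_mono_ae (f_sq_int ν ht) (habs.const_mul M) ?_
    refine hae.mono fun z hz => ?_
    have h := mul_le_mul_of_nonneg_right hz (abs_nonneg (heatConv d t ν z))
    simp only []
    rw [show (heatConv d t ν z)^2 = |heatConv d t ν z| * |heatConv d t ν z| by
      rw [abs_mul_abs_self]; ring]
    exact h
  have step2 : ∫ z : Ed d, M * |heatConv d t ν z| = M * ∫ z : Ed d, |heatConv d t ν z| :=
    integral_const_mul M _
  have step3 : ∫ z : Ed d, |heatConv d t ν z|
      ≤ ∫ z : Ed d, ((∫ x, heatKernel d t (z - x) ∂μp) + ∫ x, heatKernel d t (z - x) ∂μm) := by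
    refine integral_mono habs ((P_integrable μp ht).add (P_integrable μm ht)) fun z => ?_
    rw [heatConv_eq ν z]
    refine (abs_sub _ _).trans ?_
    rw [abs_of_nonneg (P_nonneg μp ht z), abs_of_nonneg (P_nonneg μm ht z)]
  have step4 : ∫ z : Ed d, ((∫ x, heatKernel d t (z - x) ∂μp) + ∫ x, heatKernel d t (z - x) ∂μm)
      = (μp Set.univ).toReal + (μm Set.univ).toReal := by
    rw [integral_add (P_integrable μp ht) (P_integrable μm ht), P_integral μp ht,
      P_integral μm ht]
  rw [tv_toReal ν]
  calc ∫ z : Ed d, (heatConv d t ν z)^2 ≤ M * ∫ z : Ed d, |heatConv d t ν z| := by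
        rw [← step2]; exact step1
    _ ≤ M * ((μp Set.univ).toReal + (μm Set.univ).toReal) := by
        refine mul_le_mul_of_nonneg_left (step3.trans (le_of_eq step4)) hM
end main


/-- If `μ` is a finite signed measure on `ℝ^d` with
`‖μ‖_B = sup_{t>0} t^{(d-β)/2}‖p_t ∗ μ‖_∞ < ∞`, then for every `t > 0`,
`t^{(d-β)/2} ∫ exp(-8π²t|ξ|²) |μ̂(ξ)|² dξ ≤ ‖μ‖ ‖μ‖_B`. -/
theorem stmt16 (d : ℕ) (hd : 1 ≤ d) (β : ℝ) (ν : MeasureTheory.SignedMeasure (Ed d))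
    (hB : besovNorm d β ν ≠ ⊤) (t : ℝ) (ht : 0 < t) :
    ENNReal.ofReal (t ^ (((d : ℝ) - β) / 2)) *
        ∫⁻ ξ : Ed d, ENNReal.ofReal
          (Real.exp (-(8 * π ^ 2 * t) * ‖ξ‖ ^ 2) * ‖fourierSM d ν ξ‖ ^ 2)
      ≤ ν.totalVariation Set.univ * besovNorm d β ν := by
  set E := eLpNorm (heatConv d t ν) ⊤ volume with hE
  have hα : (0:ℝ) < t ^ (((d : ℝ) - β) / 2) := Real.rpow_pos_of_pos ht _
  have hE_besov : ENNReal.ofReal (t ^ (((d : ℝ) - β) / 2)) * E ≤ besovNorm d β ν :=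
    le_iSup (fun s : {s : ℝ // 0 < s} => ENNReal.ofReal (s.1 ^ (((d : ℝ) - β) / 2))
      * eLpNorm (heatConv d s.1 ν) ⊤ volume) ⟨t, ht⟩
  have hEne : E ≠ ⊤ := by
    intro hEtop
    apply hB
    rw [eq_top_iff]
    refine le_trans ?_ hE_besov
    rw [hEtop, ENNReal.mul_top (by simp [hα.le, ENNReal.ofReal_eq_zero]; linarith)]
  set M := E.toReal with hM
  have hM0 : 0 ≤ M := ENNReal.toReal_nonneg
  have hae : ∀ᵐ z : Ed d ∂volume, |heatConv d t ν z| ≤ M := by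
    have h1 : ∀ᵐ z : Ed d ∂volume, (‖heatConv d t ν z‖₊ : ℝ≥0∞) ≤ eLpNormEssSup (heatConv d t ν) volume :=
      ae_le_eLpNormEssSup
    have hEe : E = eLpNormEssSup (heatConv d t ν) volume := by rw [hE, eLpNorm_exponent_top]
    refine h1.mono fun z hz => ?_
    rw [← hEe] at hz
    have := ENNReal.toReal_mono hEne hz
    rwa [ENNReal.coe_toReal, coe_nnnorm, Real.norm_eq_abs] at this
  -- the main chain
  have hGnn : 0 ≤ᵐ[volume] fun ξ : Ed d =>
      Real.exp (-(8 * π ^ 2 * t) * ‖ξ‖ ^ 2) * ‖fourierSM d ν ξ‖ ^ 2 :=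
    Filter.Eventually.of_forall fun ξ => mul_nonneg (Real.exp_nonneg _) (sq_nonneg _)
  rw [← ofReal_integral_eq_lintegral_ofReal (G_int ν ht) hGnn]
  have hint_le : ∫ ξ : Ed d, Real.exp (-(8 * π ^ 2 * t) * ‖ξ‖ ^ 2) * ‖fourierSM d ν ξ‖ ^ 2
      ≤ M * (ν.totalVariation Set.univ).toReal := by
    rw [main_real ν ht]
    exact f_sq_bound ν ht hM0 hae
  have htvne : ν.totalVariation Set.univ ≠ ⊤ := by
    rw [show ν.totalVariation
      = ν.toJordanDecomposition.posPart + ν.toJordanDecomposition.negPart from rfl,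
      Measure.add_apply]
    exact ENNReal.add_ne_top.2 ⟨measure_ne_top _ _, measure_ne_top _ _⟩
  calc ENNReal.ofReal (t ^ (((d : ℝ) - β) / 2)) *
        ENNReal.ofReal (∫ ξ : Ed d, Real.exp (-(8 * π ^ 2 * t) * ‖ξ‖ ^ 2) * ‖fourierSM d ν ξ‖ ^ 2)
      ≤ ENNReal.ofReal (t ^ (((d : ℝ) - β) / 2)) *
        ENNReal.ofReal (M * (ν.totalVariation Set.univ).toReal) :=
        mul_le_mul_right (ENNReal.ofReal_le_ofReal hint_le) _
    _ = ENNReal.ofReal (t ^ (((d : ℝ) - β) / 2)) * (E * ν.totalVariation Set.univ) := by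
        rw [ENNReal.ofReal_mul hM0, ENNReal.ofReal_toReal hEne, ENNReal.ofReal_toReal htvne]
    _ = ν.totalVariation Set.univ * (ENNReal.ofReal (t ^ (((d : ℝ) - β) / 2)) * E) := by ring
    _ ≤ ν.totalVariation Set.univ * besovNorm d β ν := mul_le_mul_right hE_besov _
end
end
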